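/- Let α₁, α₂ < ν be real numbers with α₁ + α₂ ≠ ν. Then there exist constants c', c'' > 0 depending only on α₁, α₂, ν such that for any a ∈ ℝ^ν, r > 0, and x ∈ B(a,r) with x ≠ 0, one has ∫_{B(a,r)} |x−z|^{−α₁}|z|^{−α₂} dz ≤ c'·|x|^{ν−α₁−α₂} + c''·(|a|+r)^{ν−α₁−α₂}. -/
import Mathlib


open MeasureTheory Metric
open scoped ENNReal

open Set

section Helpers

variable {ν : ℕ}

local notation "E" => EuclideanSpace ℝ (Fin ν)

private lemma meas_aux (c : EuclideanSpace ℝ (Fin ν)) (γ : ℝ) :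
    Measurable fun z : EuclideanSpace ℝ (Fin ν) => ENNReal.ofReal (‖z - c‖ ^ (-γ)) :=
  ((measurable_id.sub_const c).norm.pow_const (-γ)).ennreal_ofReal

private lemma vol_ball_lt_top (c : EuclideanSpace ℝ (Fin ν)) (ρ : ℝ) :
    volume (ball c ρ) < ⊤ := measure_ball_lt_top

private lemma nontriv (hν : 1 ≤ ν) : Nontrivial (EuclideanSpace ℝ (Fin ν)) := by
  have : Nonempty (Fin ν) := ⟨⟨0, hν⟩⟩
  refine ⟨0, EuclideanSpace.single ⟨0, hν⟩ 1, ?_⟩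
  intro h
  have := congrArg (fun f => f ⟨0, hν⟩) h.symm
  simp [EuclideanSpace.single_apply] at this

/-- volume of a ball in terms of rpow. -/
private lemma vol_ball (hν : 1 ≤ ν) (c : EuclideanSpace ℝ (Fin ν)) {ρ : ℝ} (hρ : 0 ≤ ρ) :
    volume (ball c ρ)
      = ENNReal.ofReal (ρ ^ ((ν : ℕ) : ℝ)) * volume (ball (0 : EuclideanSpace ℝ (Fin ν)) 1) := by
  haveI := nontriv hν
  rw [Measure.addHaar_ball volume c hρ, Real.rpow_natCast, finrank_euclideanSpace, Fintype.card_fin]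

/-- Generic annuli bound. -/
private lemma annuli_bound (hν : 1 ≤ ν) {γ : ℝ} (hγ : 0 < γ)
    (c : EuclideanSpace ℝ (Fin ν)) (t : ℕ → ℝ) (ht : ∀ k, 0 < t k)
    (A : Set (EuclideanSpace ℝ (Fin ν)))
    (hA : A ⊆ ⋃ k, ({z | t k ≤ ‖z - c‖} ∩ ball c (2 * t k))) :
    ∫⁻ z in A, ENNReal.ofReal (‖z - c‖ ^ (-γ)) ∂volume
      ≤ volume (ball (0 : EuclideanSpace ℝ (Fin ν)) 1)
        * ∑' k, ENNReal.ofReal ((t k) ^ (-γ) * (2 * t k) ^ ((ν : ℕ) : ℝ)) := by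
  calc ∫⁻ z in A, ENNReal.ofReal (‖z - c‖ ^ (-γ)) ∂volume
      ≤ ∫⁻ z in ⋃ k, ({z | t k ≤ ‖z - c‖} ∩ ball c (2 * t k)),
          ENNReal.ofReal (‖z - c‖ ^ (-γ)) ∂volume := lintegral_mono_set hA
    _ ≤ ∑' k, ∫⁻ z in ({z | t k ≤ ‖z - c‖} ∩ ball c (2 * t k)),
          ENNReal.ofReal (‖z - c‖ ^ (-γ)) ∂volume := lintegral_iUnion_le _ _
    _ ≤ ∑' k, ENNReal.ofReal ((t k) ^ (-γ) * (2 * t k) ^ ((ν : ℕ) : ℝ))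
          * volume (ball (0 : EuclideanSpace ℝ (Fin ν)) 1) := by
        refine ENNReal.tsum_le_tsum fun k => ?_
        have hb : ∀ z ∈ ({z | t k ≤ ‖z - c‖} ∩ ball c (2 * t k)),
            ENNReal.ofReal (‖z - c‖ ^ (-γ)) ≤ ENNReal.ofReal ((t k) ^ (-γ)) := by
          intro z hz
          exact ENNReal.ofReal_le_ofReal
            (Real.rpow_le_rpow_of_nonpos (ht k) hz.1 (neg_nonpos.2 hγ.le))
        calc ∫⁻ z in ({z | t k ≤ ‖z - c‖} ∩ ball c (2 * t k)),
              ENNReal.ofReal (‖z - c‖ ^ (-γ)) ∂volume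
            ≤ ∫⁻ _ in ({z | t k ≤ ‖z - c‖} ∩ ball c (2 * t k)),
              ENNReal.ofReal ((t k) ^ (-γ)) ∂volume :=
              setLIntegral_mono measurable_const hb
          _ = ENNReal.ofReal ((t k) ^ (-γ))
                * volume ({z | t k ≤ ‖z - c‖} ∩ ball c (2 * t k)) := setLIntegral_const _ _
          _ ≤ ENNReal.ofReal ((t k) ^ (-γ)) * volume (ball c (2 * t k)) := by
              gcongr
              exact inter_subset_right
          _ = ENNReal.ofReal ((t k) ^ (-γ) * (2 * t k) ^ ((ν : ℕ) : ℝ))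
                * volume (ball (0 : EuclideanSpace ℝ (Fin ν)) 1) := by
              rw [vol_ball hν c (mul_pos two_pos (ht k)).le, ENNReal.ofReal_mul (Real.rpow_nonneg (ht k).le _), mul_assoc]
    _ = _ := by rw [ENNReal.tsum_mul_right, mul_comm]

end Helpers

private lemma two_inv_pow (m : ℕ) : ((2:ℝ)⁻¹)^m = (2:ℝ) ^ (-(m:ℝ)) := by
  rw [inv_pow, ← Real.rpow_natCast 2 m, ← Real.rpow_neg (by norm_num)]

private lemma pow_helper {ρ : ℝ} (hρ : 0 < ρ) (γ u v w : ℝ) :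
    (ρ * (2:ℝ)^u) ^ (-γ) * (ρ * (2:ℝ)^v) ^ w = ρ^(w - γ) * 2^(v*w - u*γ) := by
  have h2 : (0:ℝ) ≤ 2 := by norm_num
  rw [Real.mul_rpow hρ.le (Real.rpow_nonneg h2 u),
    Real.mul_rpow hρ.le (Real.rpow_nonneg h2 v),
    ← Real.rpow_mul h2, ← Real.rpow_mul h2,
    mul_mul_mul_comm, ← Real.rpow_add hρ, ← Real.rpow_add (by norm_num : (0:ℝ) < 2)]
  congr 1 <;> ring

private lemma term_id1 {ρ γ : ℝ} (hρ : 0 < ρ) (ν : ℕ) (k : ℕ) :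
    (ρ * ((2:ℝ)⁻¹)^(k+1)) ^ (-γ) * (2 * (ρ * ((2:ℝ)⁻¹)^(k+1))) ^ ((ν : ℕ) : ℝ)
      = (2:ℝ)^γ * ρ^((ν:ℝ) - γ) * ((2:ℝ)^(γ - (ν:ℝ)))^k := by
  have h2 : (0:ℝ) < 2 := two_pos
  have h2t : (2:ℝ) * (ρ * (2:ℝ)^(-(((k:ℝ))+1))) = ρ * (2:ℝ)^(-(k:ℝ)) := by
    rw [show -(k:ℝ) = 1 + (-((k:ℝ)+1)) by ring, Real.rpow_add h2, Real.rpow_one]; ring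
  rw [two_inv_pow, Nat.cast_add, Nat.cast_one, h2t,
    pow_helper hρ γ (-((k:ℝ)+1)) (-(k:ℝ)) ((ν:ℕ):ℝ),
    ← Real.rpow_natCast ((2:ℝ)^(γ - (ν:ℝ))) k, ← Real.rpow_mul h2.le,
    show (-(k:ℝ))*((ν:ℕ):ℝ) - (-((k:ℝ)+1))*γ = γ + (γ - ((ν:ℕ):ℝ))*(k:ℝ) by ring,
    Real.rpow_add h2]
  ring

private lemma term_id2 {ρ γ : ℝ} (hρ : 0 < ρ) (ν : ℕ) (k : ℕ) :
    (ρ * (2:ℝ)^(k:ℕ)) ^ (-γ) * (2 * (ρ * (2:ℝ)^(k:ℕ))) ^ ((ν : ℕ) : ℝ)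
      = (2:ℝ)^((ν:ℝ)) * ρ^((ν:ℝ) - γ) * ((2:ℝ)^((ν:ℝ) - γ))^k := by
  have h2 : (0:ℝ) < 2 := two_pos
  have h2t : (2:ℝ) * (ρ * (2:ℝ)^((k:ℝ))) = ρ * (2:ℝ)^((k:ℝ)+1) := by
    rw [Real.rpow_add h2, Real.rpow_one]; ring
  rw [← Real.rpow_natCast 2 k, h2t,
    pow_helper hρ γ ((k:ℝ)) ((k:ℝ)+1) ((ν:ℕ):ℝ),
    ← Real.rpow_natCast ((2:ℝ)^((ν:ℝ) - γ)) k, ← Real.rpow_mul h2.le,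
    show ((k:ℝ)+1)*((ν:ℕ):ℝ) - (k:ℝ)*γ = ((ν:ℕ):ℝ) + (((ν:ℕ):ℝ) - γ)*(k:ℝ) by ring,
    Real.rpow_add h2]
  ring

section Helpers2

variable {ν : ℕ}

private lemma geom_ne_top {q : ℝ} (hq : q < 1) :
    (∑' k : ℕ, (ENNReal.ofReal q)^k) ≠ ⊤ := by
  rw [ENNReal.tsum_geometric]
  refine ENNReal.inv_ne_top.2 fun h => ?_
  exact absurd (tsub_eq_zero_iff_le.1 h) (not_le.2 (ENNReal.ofReal_lt_one.2 hq))

/-- Bound for the integral of `‖z-c‖^(-γ)` over a ball, `γ < ν`. -/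
private lemma helper1 (hν : 1 ≤ ν) {γ : ℝ} (hγ : γ < ν) :
    ∃ C : ℝ≥0∞, C ≠ ⊤ ∧ ∀ (c : EuclideanSpace ℝ (Fin ν)) (ρ : ℝ), 0 < ρ →
      ∫⁻ z in ball c ρ, ENNReal.ofReal (‖z - c‖ ^ (-γ)) ∂volume
        ≤ C * ENNReal.ofReal (ρ ^ ((ν : ℝ) - γ)) := by
  classical
  haveI := nontriv hν
  set V := volume (ball (0 : EuclideanSpace ℝ (Fin ν)) 1) with hV
  have hVfin : V ≠ ⊤ := measure_ball_lt_top.ne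
  rcases le_or_gt γ 0 with hγ0 | hγ0
  · refine ⟨V, hVfin, fun c ρ hρ => ?_⟩
    have hb : ∀ z ∈ ball c ρ, ENNReal.ofReal (‖z - c‖ ^ (-γ))
        ≤ ENNReal.ofReal (ρ ^ (-γ)) := by
      intro z hz
      have hzc : ‖z - c‖ ≤ ρ := by
        rw [← dist_eq_norm]; exact (mem_ball.1 hz).le
      exact ENNReal.ofReal_le_ofReal
        (Real.rpow_le_rpow (norm_nonneg _) hzc (neg_nonneg.2 hγ0))
    calc ∫⁻ z in ball c ρ, ENNReal.ofReal (‖z - c‖ ^ (-γ)) ∂volume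
        ≤ ∫⁻ _ in ball c ρ, ENNReal.ofReal (ρ ^ (-γ)) ∂volume :=
          setLIntegral_mono measurable_const hb
      _ = ENNReal.ofReal (ρ ^ (-γ)) * volume (ball c ρ) := setLIntegral_const _ _
      _ = V * ENNReal.ofReal (ρ ^ ((ν : ℝ) - γ)) := by
          rw [vol_ball hν c hρ.le, ← mul_assoc,
            ← ENNReal.ofReal_mul (Real.rpow_nonneg hρ.le _),
            ← Real.rpow_add hρ, mul_comm (V)]
          congr 2
          ring
  · -- dyadic decomposition
    set q : ℝ := (2:ℝ)^(γ - (ν:ℝ)) with hq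
    have hq1 : q < 1 :=
      Real.rpow_lt_one_of_one_lt_of_neg one_lt_two (by linarith)
    have hq0 : 0 ≤ q := Real.rpow_nonneg (by norm_num) _
    set G := ∑' k : ℕ, (ENNReal.ofReal q)^k with hG
    have hGfin : G ≠ ⊤ := geom_ne_top hq1
    refine ⟨ENNReal.ofReal ((2:ℝ)^γ) * G * V, by
      exact ENNReal.mul_ne_top (ENNReal.mul_ne_top ENNReal.ofReal_ne_top hGfin) hVfin,
      fun c ρ hρ => ?_⟩
    set t : ℕ → ℝ := fun k => ρ * ((2:ℝ)⁻¹)^(k+1) with ht'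
    have ht : ∀ k, 0 < t k := fun k => by positivity
    have h2t : ∀ k, 2 * t k = ρ * ((2:ℝ)⁻¹)^k := fun k => by
      simp only [ht', pow_succ]; ring
    have hcov : ball c ρ \ {c} ⊆ ⋃ k, ({z | t k ≤ ‖z - c‖} ∩ ball c (2 * t k)) := by
      intro z hz
      have hd0 : 0 < ‖z - c‖ := by
        rw [norm_pos_iff, sub_ne_zero]
        exact hz.2
      have hdρ : ‖z - c‖ < ρ := by
        rw [← dist_eq_norm]; exact mem_ball.1 hz.1
      have hex : ∃ n : ℕ, t n ≤ ‖z - c‖ := by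
        obtain ⟨n, hn⟩ := exists_pow_lt_of_lt_one (div_pos hd0 hρ)
          (by norm_num : (2:ℝ)⁻¹ < 1)
        refine ⟨n, le_of_lt ?_⟩
        have h1 : ρ * ((2:ℝ)⁻¹)^n < ‖z - c‖ := by
          rw [mul_comm]
          exact (lt_div_iff₀ hρ).1 hn
        have h2 : ((2:ℝ)⁻¹)^(n+1) ≤ ((2:ℝ)⁻¹)^n :=
          pow_le_pow_of_le_one (by norm_num) (by norm_num) (Nat.le_succ n)
        calc t n = ρ * ((2:ℝ)⁻¹)^(n+1) := rfl
          _ ≤ ρ * ((2:ℝ)⁻¹)^n := by nlinarith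
          _ < ‖z - c‖ := h1
      refine mem_iUnion.2 ⟨Nat.find hex, Nat.find_spec hex, ?_⟩
      rw [mem_ball, dist_eq_norm, h2t]
      rcases Nat.eq_zero_or_pos (Nat.find hex) with h0 | hpos
      · rw [h0]; simpa using hdρ
      · have hmin := Nat.find_min hex (Nat.sub_lt hpos one_pos)
        have : Nat.find hex - 1 + 1 = Nat.find hex := Nat.succ_pred_eq_of_pos hpos
        rw [← this]
        exact not_le.1 hmin
    have hsum : ∑' k, ENNReal.ofReal ((t k) ^ (-γ) * (2 * t k) ^ ((ν : ℕ) : ℝ))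
        = ENNReal.ofReal ((2:ℝ)^γ * ρ^((ν:ℝ) - γ)) * G := by
      rw [hG, ← ENNReal.tsum_mul_left]
      refine tsum_congr fun k => ?_
      rw [← ENNReal.ofReal_pow hq0, ← ENNReal.ofReal_mul (by positivity)]
      congr 1
      simp only [ht']
      exact term_id1 hρ ν k
    calc ∫⁻ z in ball c ρ, ENNReal.ofReal (‖z - c‖ ^ (-γ)) ∂volume
        ≤ ∫⁻ z in ball c ρ \ {c}, ENNReal.ofReal (‖z - c‖ ^ (-γ)) ∂volume
          + ∫⁻ z in ({c} : Set (EuclideanSpace ℝ (Fin ν))),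
              ENNReal.ofReal (‖z - c‖ ^ (-γ)) ∂volume := by
          refine le_trans (lintegral_mono_set fun z hz => ?_) (lintegral_union_le _ _ _)
          by_cases h : z = c
          · exact mem_union_right _ (by simp [h])
          · exact mem_union_left _ ⟨hz, h⟩
      _ = ∫⁻ z in ball c ρ \ {c}, ENNReal.ofReal (‖z - c‖ ^ (-γ)) ∂volume := by
          rw [setLIntegral_measure_zero _ _ (measure_singleton c), add_zero]
      _ ≤ V * ∑' k, ENNReal.ofReal ((t k) ^ (-γ) * (2 * t k) ^ ((ν : ℕ) : ℝ)) :=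
          annuli_bound hν hγ0 c t ht _ hcov
      _ = V * (ENNReal.ofReal ((2:ℝ)^γ * ρ^((ν:ℝ) - γ)) * G) := by rw [hsum]
      _ = ENNReal.ofReal ((2:ℝ)^γ) * G * V * ENNReal.ofReal (ρ ^ ((ν : ℝ) - γ)) := by
          rw [ENNReal.ofReal_mul (Real.rpow_nonneg (by norm_num) _)]
          ring


/-- Bound for the integral of `‖z-c‖^(-γ)` over the complement of a ball, `γ > ν`. -/
private lemma helper2 (hν : 1 ≤ ν) {γ : ℝ} (hγ : (ν:ℝ) < γ) :
    ∃ C : ℝ≥0∞, C ≠ ⊤ ∧ ∀ (c : EuclideanSpace ℝ (Fin ν)) (ρ : ℝ), 0 < ρ →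
      ∫⁻ z in (ball c ρ)ᶜ, ENNReal.ofReal (‖z - c‖ ^ (-γ)) ∂volume
        ≤ C * ENNReal.ofReal (ρ ^ ((ν : ℝ) - γ)) := by
  classical
  haveI := nontriv hν
  set V := volume (ball (0 : EuclideanSpace ℝ (Fin ν)) 1) with hV
  have hVfin : V ≠ ⊤ := measure_ball_lt_top.ne
  have hγ0 : 0 < γ := lt_of_le_of_lt (by exact_mod_cast Nat.zero_le ν) hγ
  set q : ℝ := (2:ℝ)^((ν:ℝ) - γ) with hq
  have hq1 : q < 1 := Real.rpow_lt_one_of_one_lt_of_neg one_lt_two (by linarith)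
  have hq0 : 0 ≤ q := Real.rpow_nonneg (by norm_num) _
  set G := ∑' k : ℕ, (ENNReal.ofReal q)^k with hG
  have hGfin : G ≠ ⊤ := geom_ne_top hq1
  refine ⟨ENNReal.ofReal ((2:ℝ)^((ν:ℝ))) * G * V, by
    exact ENNReal.mul_ne_top (ENNReal.mul_ne_top ENNReal.ofReal_ne_top hGfin) hVfin,
    fun c ρ hρ => ?_⟩
  set t : ℕ → ℝ := fun k => ρ * (2:ℝ)^(k:ℕ) with ht'
  have ht : ∀ k, 0 < t k := fun k => by positivity
  have h2t : ∀ k, 2 * t k = ρ * (2:ℝ)^(k+1) := fun k => by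
    simp only [ht', pow_succ]; ring
  have hcov : (ball c ρ)ᶜ ⊆ ⋃ k, ({z | t k ≤ ‖z - c‖} ∩ ball c (2 * t k)) := by
    intro z hz
    have hdρ : ρ ≤ ‖z - c‖ := by
      rw [← dist_eq_norm]
      exact not_lt.1 (fun h => hz (mem_ball.2 h))
    have hex : ∃ n : ℕ, ‖z - c‖ < 2 * t n := by
      obtain ⟨n, hn⟩ := pow_unbounded_of_one_lt (‖z - c‖ / ρ) (one_lt_two (α := ℝ))
      refine ⟨n, ?_⟩
      rw [h2t]
      have h1 : ‖z - c‖ < ρ * (2:ℝ)^n := by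
        rw [mul_comm]
        exact (div_lt_iff₀ hρ).1 hn
      have h2 : ρ * (2:ℝ)^n ≤ ρ * (2:ℝ)^(n+1) := by
        rw [pow_succ]
        nlinarith [pow_pos (two_pos (α := ℝ)) n]
      linarith
    refine mem_iUnion.2 ⟨Nat.find hex, ?_, by
      rw [mem_ball, dist_eq_norm]; exact Nat.find_spec hex⟩
    rcases Nat.eq_zero_or_pos (Nat.find hex) with h0 | hpos
    · rw [h0]
      simpa [ht'] using hdρ
    · have hmin := Nat.find_min hex (Nat.sub_lt hpos one_pos)
      rw [not_lt, h2t, show Nat.find hex - 1 + 1 = Nat.find hex from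
        Nat.succ_pred_eq_of_pos hpos] at hmin
      exact hmin
  have hsum : ∑' k, ENNReal.ofReal ((t k) ^ (-γ) * (2 * t k) ^ ((ν : ℕ) : ℝ))
      = ENNReal.ofReal ((2:ℝ)^((ν:ℝ)) * ρ^((ν:ℝ) - γ)) * G := by
    rw [hG, ← ENNReal.tsum_mul_left]
    refine tsum_congr fun k => ?_
    rw [← ENNReal.ofReal_pow hq0, ← ENNReal.ofReal_mul (by positivity)]
    congr 1
    simp only [ht']
    exact term_id2 hρ ν k
  calc ∫⁻ z in (ball c ρ)ᶜ, ENNReal.ofReal (‖z - c‖ ^ (-γ)) ∂volume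
      ≤ V * ∑' k, ENNReal.ofReal ((t k) ^ (-γ) * (2 * t k) ^ ((ν : ℕ) : ℝ)) :=
        annuli_bound hν hγ0 c t ht _ hcov
    _ = V * (ENNReal.ofReal ((2:ℝ)^((ν:ℝ)) * ρ^((ν:ℝ) - γ)) * G) := by rw [hsum]
    _ = ENNReal.ofReal ((2:ℝ)^((ν:ℝ))) * G * V * ENNReal.ofReal (ρ ^ ((ν : ℝ) - γ)) := by
        rw [ENNReal.ofReal_mul (Real.rpow_nonneg (by norm_num) _)]
        ring

private lemma aux_final {M L : ℝ≥0∞} (hM : M ≠ ⊤) {u v : ℝ} (hu : 0 ≤ u) (hv : 0 ≤ v)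
    (h : L ≤ M * ENNReal.ofReal u) :
    L ≤ ENNReal.ofReal ((M.toReal + 1) * u + 1 * v) := by
  refine h.trans ?_
  have : M * ENNReal.ofReal u = ENNReal.ofReal (M.toReal * u) := by
    rw [ENNReal.ofReal_mul ENNReal.toReal_nonneg, ENNReal.ofReal_toReal hM]
  rw [this]
  exact ENNReal.ofReal_le_ofReal (by nlinarith [ENNReal.toReal_nonneg (a := M)])

private lemma region_le {ν : ℕ} {x : EuclideanSpace ℝ (Fin ν)} {α₁ α₂ : ℝ}
    {S T : Set (EuclideanSpace ℝ (Fin ν))} {c : EuclideanSpace ℝ (Fin ν)} {κ γ : ℝ}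
    (hκ : 0 ≤ κ) (hST : S ⊆ T)
    (hpt : ∀ z ∈ S, ‖x - z‖ ^ (-α₁) * ‖z‖ ^ (-α₂) ≤ κ * ‖z - c‖ ^ (-γ)) :
    ∫⁻ z in S, ENNReal.ofReal (‖x - z‖ ^ (-α₁) * ‖z‖ ^ (-α₂)) ∂volume
      ≤ ENNReal.ofReal κ * ∫⁻ z in T, ENNReal.ofReal (‖z - c‖ ^ (-γ)) ∂volume := by
  calc ∫⁻ z in S, ENNReal.ofReal (‖x - z‖ ^ (-α₁) * ‖z‖ ^ (-α₂)) ∂volume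
      ≤ ∫⁻ z in S, ENNReal.ofReal κ * ENNReal.ofReal (‖z - c‖ ^ (-γ)) ∂volume := by
        refine setLIntegral_mono ((meas_aux c γ).const_mul _) fun z hz => ?_
        rw [← ENNReal.ofReal_mul hκ]
        exact ENNReal.ofReal_le_ofReal (hpt z hz)
    _ ≤ ∫⁻ z in T, ENNReal.ofReal κ * ENNReal.ofReal (‖z - c‖ ^ (-γ)) ∂volume :=
        lintegral_mono_set hST
    _ = ENNReal.ofReal κ * ∫⁻ z in T, ENNReal.ofReal (‖z - c‖ ^ (-γ)) ∂volume :=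
        lintegral_const_mul' _ _ ENNReal.ofReal_ne_top


private lemma ofReal_shuffle (C : ℝ≥0∞) {κ w u v : ℝ} (hκ : 0 ≤ κ) (hu : 0 ≤ u)
    (h : κ * w = u * v) :
    ENNReal.ofReal κ * (C * ENNReal.ofReal w) = C * ENNReal.ofReal u * ENNReal.ofReal v := by
  rw [show ENNReal.ofReal κ * (C * ENNReal.ofReal w)
      = C * (ENNReal.ofReal κ * ENNReal.ofReal w) by ring,
    ← ENNReal.ofReal_mul hκ, h, ENNReal.ofReal_mul hu, ← mul_assoc]

end Helpers2
/-- For `α₁, α₂ < ν` with `α₁ + α₂ ≠ ν`, there are constants `c', c'' > 0`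
depending only on `α₁, α₂, ν` such that for any ball `B(a,r)` and any nonzero
`x ∈ B(a,r)`,
`∫_{B(a,r)} |x-z|^{-α₁} |z|^{-α₂} dz ≤ c' |x|^{ν-α₁-α₂} + c'' (|a|+r)^{ν-α₁-α₂}`. -/
theorem riesz_two_center_bound_off_critical
    (ν : ℕ) (hν : 1 ≤ ν) (α₁ α₂ : ℝ) (h₁ : α₁ < ν) (h₂ : α₂ < ν)
    (hcrit : α₁ + α₂ ≠ ν) :
    ∃ c' c'' : ℝ, 0 < c' ∧ 0 < c'' ∧
      ∀ (a : EuclideanSpace ℝ (Fin ν)) (r : ℝ), 0 < r →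
      ∀ x ∈ ball a r, x ≠ 0 →
        (∫⁻ z in ball a r,
            ENNReal.ofReal (‖x - z‖ ^ (-α₁) * ‖z‖ ^ (-α₂)) ∂volume)
          ≤ ENNReal.ofReal
              (c' * ‖x‖ ^ ((ν : ℝ) - α₁ - α₂)
                + c'' * (‖a‖ + r) ^ ((ν : ℝ) - α₁ - α₂)) := by
  classical
  haveI := nontriv hν
  obtain ⟨C₁, hC₁fin, hC₁⟩ := helper1 hν h₁
  obtain ⟨C₂, hC₂fin, hC₂⟩ := helper1 hν h₂
  set β : ℝ := (ν : ℝ) - α₁ - α₂ with hβdef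
  rcases hcrit.lt_or_gt with hlt | hgt
  · -- subcritical case: α₁ + α₂ < ν
    obtain ⟨C₁₂, hC₁₂fin, hC₁₂⟩ := helper1 hν (show α₁ + α₂ < (ν:ℝ) from hlt)
    have heβ : (ν:ℝ) - (α₁ + α₂) = β := by rw [hβdef]; ring
    set MA : ℝ≥0∞ := C₁₂ * ENNReal.ofReal ((2:ℝ) ^ β)
      + C₁ * ENNReal.ofReal ((2:ℝ) ^ ((ν:ℝ) - α₁)) with hMA
    set MB : ℝ≥0∞ := C₁₂ + C₂ * ENNReal.ofReal ((2:ℝ) ^ (-α₁)) with hMB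
    have hMfin : MA + MB ≠ ⊤ := by
      rw [hMA, hMB]
      exact ENNReal.add_ne_top.2
        ⟨ENNReal.add_ne_top.2
          ⟨ENNReal.mul_ne_top hC₁₂fin ENNReal.ofReal_ne_top,
           ENNReal.mul_ne_top hC₁fin ENNReal.ofReal_ne_top⟩,
         ENNReal.add_ne_top.2
          ⟨hC₁₂fin, ENNReal.mul_ne_top hC₂fin ENNReal.ofReal_ne_top⟩⟩
    refine ⟨1, (MA + MB).toReal + 1, one_pos, by positivity, fun a r hr x hx hx0 => ?_⟩
    have hR : 0 < ‖a‖ + r := by positivity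
    have hxa : ‖x - a‖ < r := by rw [← dist_eq_norm]; exact mem_ball.1 hx
    have hxR : ‖x‖ < ‖a‖ + r := by
      have h := norm_add_le (x - a) a
      rw [sub_add_cancel] at h
      linarith
    have hzR : ∀ z ∈ ball a r, ‖z‖ < ‖a‖ + r := by
      intro z hz
      have hza : ‖z - a‖ < r := by rw [← dist_eq_norm]; exact mem_ball.1 hz
      have h := norm_add_le (z - a) a
      rw [sub_add_cancel] at h
      linarith
    set D : Set (EuclideanSpace ℝ (Fin ν)) := ball a r \ ({x} ∪ {0}) with hD
    set A : Set (EuclideanSpace ℝ (Fin ν)) := D ∩ {z | ‖x - z‖ ≤ ‖z‖} with hA'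
    set B : Set (EuclideanSpace ℝ (Fin ν)) := D ∩ {z | ‖z‖ ≤ ‖x - z‖} with hB'
    have hnull : volume ({x} ∪ ({0} : Set (EuclideanSpace ℝ (Fin ν)))) = 0 :=
      measure_union_null (measure_singleton x) (measure_singleton 0)
    have hAx2R : A ⊆ ball x (2 * (‖a‖ + r)) := by
      intro z hz
      rw [mem_ball, dist_eq_norm]
      have h := norm_sub_le z x
      have hzR' := hzR z hz.1.1
      linarith
    have hB0R : B ⊆ ball (0 : EuclideanSpace ℝ (Fin ν)) (‖a‖ + r) := by
      intro z hz
      rw [mem_ball_zero_iff]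
      exact hzR z hz.1.1
    have hAbound : ∫⁻ z in A, ENNReal.ofReal (‖x - z‖ ^ (-α₁) * ‖z‖ ^ (-α₂)) ∂volume
        ≤ MA * ENNReal.ofReal ((‖a‖ + r) ^ β) := by
      rcases le_or_gt 0 α₂ with hs | hs
      · have hpt : ∀ z ∈ A, ‖x - z‖ ^ (-α₁) * ‖z‖ ^ (-α₂)
            ≤ 1 * ‖z - x‖ ^ (-(α₁ + α₂)) := by
          intro z hz
          have hzx : z ≠ x := fun h => hz.1.2 (Or.inl (by simp [h]))
          have hxz : 0 < ‖x - z‖ := by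
            rw [norm_pos_iff, sub_ne_zero]
            exact fun h => hzx h.symm
          have hb1 : ‖z‖ ^ (-α₂) ≤ ‖x - z‖ ^ (-α₂) :=
            Real.rpow_le_rpow_of_nonpos hxz hz.2 (neg_nonpos.2 hs)
          calc ‖x - z‖ ^ (-α₁) * ‖z‖ ^ (-α₂)
              ≤ ‖x - z‖ ^ (-α₁) * ‖x - z‖ ^ (-α₂) :=
                mul_le_mul_of_nonneg_left hb1 (Real.rpow_nonneg (norm_nonneg _) _)
            _ = ‖x - z‖ ^ (-(α₁ + α₂)) := by rw [← Real.rpow_add hxz, neg_add]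
            _ = 1 * ‖z - x‖ ^ (-(α₁ + α₂)) := by rw [norm_sub_rev, one_mul]
        calc ∫⁻ z in A, ENNReal.ofReal (‖x - z‖ ^ (-α₁) * ‖z‖ ^ (-α₂)) ∂volume
            ≤ ENNReal.ofReal 1 * ∫⁻ z in ball x (2 * (‖a‖ + r)),
                ENNReal.ofReal (‖z - x‖ ^ (-(α₁ + α₂))) ∂volume :=
              region_le zero_le_one hAx2R hpt
          _ ≤ ENNReal.ofReal 1
                * (C₁₂ * ENNReal.ofReal ((2 * (‖a‖ + r)) ^ ((ν:ℝ) - (α₁ + α₂)))) := by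
              gcongr
              exact hC₁₂ x (2 * (‖a‖ + r)) (by positivity)
          _ = C₁₂ * ENNReal.ofReal ((2:ℝ) ^ β) * ENNReal.ofReal ((‖a‖ + r) ^ β) :=
              ofReal_shuffle _ zero_le_one (Real.rpow_nonneg (by norm_num) _)
                (by rw [one_mul, heβ, Real.mul_rpow (by norm_num) hR.le])
          _ ≤ MA * ENNReal.ofReal ((‖a‖ + r) ^ β) := by
              rw [hMA]
              exact mul_le_mul_left (self_le_add_right _ _) _
      · have hκ : (0:ℝ) ≤ (‖a‖ + r) ^ (-α₂) := Real.rpow_nonneg hR.le _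
        have hpt : ∀ z ∈ A, ‖x - z‖ ^ (-α₁) * ‖z‖ ^ (-α₂)
            ≤ (‖a‖ + r) ^ (-α₂) * ‖z - x‖ ^ (-α₁) := by
          intro z hz
          have hb1 : ‖z‖ ^ (-α₂) ≤ (‖a‖ + r) ^ (-α₂) :=
            Real.rpow_le_rpow (norm_nonneg _) (hzR z hz.1.1).le (by linarith)
          calc ‖x - z‖ ^ (-α₁) * ‖z‖ ^ (-α₂)
              ≤ ‖x - z‖ ^ (-α₁) * (‖a‖ + r) ^ (-α₂) :=
                mul_le_mul_of_nonneg_left hb1 (Real.rpow_nonneg (norm_nonneg _) _)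
            _ = (‖a‖ + r) ^ (-α₂) * ‖z - x‖ ^ (-α₁) := by rw [norm_sub_rev]; ring
        calc ∫⁻ z in A, ENNReal.ofReal (‖x - z‖ ^ (-α₁) * ‖z‖ ^ (-α₂)) ∂volume
            ≤ ENNReal.ofReal ((‖a‖ + r) ^ (-α₂)) * ∫⁻ z in ball x (2 * (‖a‖ + r)),
                ENNReal.ofReal (‖z - x‖ ^ (-α₁)) ∂volume :=
              region_le hκ hAx2R hpt
          _ ≤ ENNReal.ofReal ((‖a‖ + r) ^ (-α₂))
                * (C₁ * ENNReal.ofReal ((2 * (‖a‖ + r)) ^ ((ν:ℝ) - α₁))) := by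
              gcongr
              exact hC₁ x (2 * (‖a‖ + r)) (by positivity)
          _ = C₁ * ENNReal.ofReal ((2:ℝ) ^ ((ν:ℝ) - α₁))
                * ENNReal.ofReal ((‖a‖ + r) ^ β) := by
              refine ofReal_shuffle _ hκ (Real.rpow_nonneg (by norm_num) _) ?_
              rw [Real.mul_rpow (by norm_num) hR.le, mul_comm ((2:ℝ) ^ ((ν:ℝ) - α₁)),
                ← mul_assoc, ← Real.rpow_add hR, mul_comm]
              congr 2
              rw [hβdef]; ring
          _ ≤ MA * ENNReal.ofReal ((‖a‖ + r) ^ β) := by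
              rw [hMA]
              exact mul_le_mul_left (self_le_add_left _ _) _
    have hBbound : ∫⁻ z in B, ENNReal.ofReal (‖x - z‖ ^ (-α₁) * ‖z‖ ^ (-α₂)) ∂volume
        ≤ MB * ENNReal.ofReal ((‖a‖ + r) ^ β) := by
      rcases le_or_gt 0 α₁ with hs | hs
      · have hpt : ∀ z ∈ B, ‖x - z‖ ^ (-α₁) * ‖z‖ ^ (-α₂)
            ≤ 1 * ‖z - (0 : EuclideanSpace ℝ (Fin ν))‖ ^ (-(α₁ + α₂)) := by
          intro z hz
          have hz0 : z ≠ 0 := fun h => hz.1.2 (Or.inr (by simp [h]))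
          have hzp : 0 < ‖z‖ := norm_pos_iff.2 hz0
          have hb1 : ‖x - z‖ ^ (-α₁) ≤ ‖z‖ ^ (-α₁) :=
            Real.rpow_le_rpow_of_nonpos hzp hz.2 (neg_nonpos.2 hs)
          calc ‖x - z‖ ^ (-α₁) * ‖z‖ ^ (-α₂)
              ≤ ‖z‖ ^ (-α₁) * ‖z‖ ^ (-α₂) :=
                mul_le_mul_of_nonneg_right hb1 (Real.rpow_nonneg (norm_nonneg _) _)
            _ = ‖z‖ ^ (-(α₁ + α₂)) := by rw [← Real.rpow_add hzp, neg_add]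
            _ = 1 * ‖z - (0 : EuclideanSpace ℝ (Fin ν))‖ ^ (-(α₁ + α₂)) := by
                rw [sub_zero, one_mul]
        calc ∫⁻ z in B, ENNReal.ofReal (‖x - z‖ ^ (-α₁) * ‖z‖ ^ (-α₂)) ∂volume
            ≤ ENNReal.ofReal 1 * ∫⁻ z in ball (0 : EuclideanSpace ℝ (Fin ν)) (‖a‖ + r),
                ENNReal.ofReal (‖z - 0‖ ^ (-(α₁ + α₂))) ∂volume :=
              region_le zero_le_one hB0R hpt
          _ ≤ ENNReal.ofReal 1
                * (C₁₂ * ENNReal.ofReal ((‖a‖ + r) ^ ((ν:ℝ) - (α₁ + α₂)))) := by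
              gcongr
              exact hC₁₂ 0 (‖a‖ + r) hR
          _ = C₁₂ * ENNReal.ofReal ((‖a‖ + r) ^ β) := by
              rw [ENNReal.ofReal_one, one_mul, heβ]
          _ ≤ MB * ENNReal.ofReal ((‖a‖ + r) ^ β) := by
              rw [hMB]
              exact mul_le_mul_left (self_le_add_right _ _) _
      · have hκ : (0:ℝ) ≤ (2 * (‖a‖ + r)) ^ (-α₁) := Real.rpow_nonneg (by positivity) _
        have hpt : ∀ z ∈ B, ‖x - z‖ ^ (-α₁) * ‖z‖ ^ (-α₂)
            ≤ (2 * (‖a‖ + r)) ^ (-α₁) * ‖z - (0 : EuclideanSpace ℝ (Fin ν))‖ ^ (-α₂) := by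
          intro z hz
          have hxz2R : ‖x - z‖ ≤ 2 * (‖a‖ + r) := by
            have h := norm_sub_le x z
            have hzR' := hzR z hz.1.1
            linarith
          have hb1 : ‖x - z‖ ^ (-α₁) ≤ (2 * (‖a‖ + r)) ^ (-α₁) :=
            Real.rpow_le_rpow (norm_nonneg _) hxz2R (by linarith)
          calc ‖x - z‖ ^ (-α₁) * ‖z‖ ^ (-α₂)
              ≤ (2 * (‖a‖ + r)) ^ (-α₁) * ‖z‖ ^ (-α₂) :=
                mul_le_mul_of_nonneg_right hb1 (Real.rpow_nonneg (norm_nonneg _) _)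
            _ = (2 * (‖a‖ + r)) ^ (-α₁) * ‖z - (0 : EuclideanSpace ℝ (Fin ν))‖ ^ (-α₂) := by
                rw [sub_zero]
        calc ∫⁻ z in B, ENNReal.ofReal (‖x - z‖ ^ (-α₁) * ‖z‖ ^ (-α₂)) ∂volume
            ≤ ENNReal.ofReal ((2 * (‖a‖ + r)) ^ (-α₁))
                * ∫⁻ z in ball (0 : EuclideanSpace ℝ (Fin ν)) (‖a‖ + r),
                ENNReal.ofReal (‖z - 0‖ ^ (-α₂)) ∂volume :=
              region_le hκ hB0R hpt
          _ ≤ ENNReal.ofReal ((2 * (‖a‖ + r)) ^ (-α₁))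
                * (C₂ * ENNReal.ofReal ((‖a‖ + r) ^ ((ν:ℝ) - α₂))) := by
              gcongr
              exact hC₂ 0 (‖a‖ + r) hR
          _ = C₂ * ENNReal.ofReal ((2:ℝ) ^ (-α₁))
                * ENNReal.ofReal ((‖a‖ + r) ^ β) := by
              refine ofReal_shuffle _ hκ (Real.rpow_nonneg (by norm_num) _) ?_
              rw [Real.mul_rpow (by norm_num) hR.le, mul_assoc, ← Real.rpow_add hR]
              congr 2
              rw [hβdef]; ring
          _ ≤ MB * ENNReal.ofReal ((‖a‖ + r) ^ β) := by
              rw [hMB]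
              exact mul_le_mul_left (self_le_add_left _ _) _
    have hchain : (∫⁻ z in ball a r,
          ENNReal.ofReal (‖x - z‖ ^ (-α₁) * ‖z‖ ^ (-α₂)) ∂volume)
        ≤ (MA + MB) * ENNReal.ofReal ((‖a‖ + r) ^ β) := by
      calc ∫⁻ z in ball a r, ENNReal.ofReal (‖x - z‖ ^ (-α₁) * ‖z‖ ^ (-α₂)) ∂volume
          ≤ ∫⁻ z in D ∪ ({x} ∪ {0}),
              ENNReal.ofReal (‖x - z‖ ^ (-α₁) * ‖z‖ ^ (-α₂)) ∂volume := by
            refine lintegral_mono_set fun z hz => ?_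
            by_cases h : z ∈ ({x} ∪ {0} : Set (EuclideanSpace ℝ (Fin ν)))
            · exact Set.mem_union_right _ h
            · exact Set.mem_union_left _ ⟨hz, h⟩
        _ ≤ (∫⁻ z in D, ENNReal.ofReal (‖x - z‖ ^ (-α₁) * ‖z‖ ^ (-α₂)) ∂volume)
            + ∫⁻ z in ({x} ∪ {0} : Set (EuclideanSpace ℝ (Fin ν))),
              ENNReal.ofReal (‖x - z‖ ^ (-α₁) * ‖z‖ ^ (-α₂)) ∂volume :=
            lintegral_union_le _ _ _
        _ = ∫⁻ z in D, ENNReal.ofReal (‖x - z‖ ^ (-α₁) * ‖z‖ ^ (-α₂)) ∂volume := by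
            rw [setLIntegral_measure_zero _ _ hnull, add_zero]
        _ ≤ ∫⁻ z in A ∪ B, ENNReal.ofReal (‖x - z‖ ^ (-α₁) * ‖z‖ ^ (-α₂)) ∂volume := by
            refine lintegral_mono_set fun z hz => ?_
            rcases le_total ‖x - z‖ ‖z‖ with h | h
            · exact Set.mem_union_left _ ⟨hz, h⟩
            · exact Set.mem_union_right _ ⟨hz, h⟩
        _ ≤ (∫⁻ z in A, ENNReal.ofReal (‖x - z‖ ^ (-α₁) * ‖z‖ ^ (-α₂)) ∂volume)
            + ∫⁻ z in B, ENNReal.ofReal (‖x - z‖ ^ (-α₁) * ‖z‖ ^ (-α₂)) ∂volume :=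
            lintegral_union_le _ _ _
        _ ≤ MA * ENNReal.ofReal ((‖a‖ + r) ^ β) + MB * ENNReal.ofReal ((‖a‖ + r) ^ β) :=
            add_le_add hAbound hBbound
        _ = (MA + MB) * ENNReal.ofReal ((‖a‖ + r) ^ β) := (add_mul _ _ _).symm
    have hfin := aux_final hMfin (Real.rpow_nonneg hR.le β)
      (Real.rpow_nonneg (norm_nonneg x) β) hchain
    rw [add_comm] at hfin
    exact hfin
  · -- supercritical case: ν < α₁ + α₂
    have hα₁0 : 0 < α₁ := by linarith
    have hα₂0 : 0 < α₂ := by linarith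
    obtain ⟨D₁₂, hD₁₂fin, hD₁₂⟩ := helper2 hν (show (ν:ℝ) < α₁ + α₂ from hgt)
    have heβ : (ν:ℝ) - (α₁ + α₂) = β := by rw [hβdef]; ring
    set Mn : ℝ≥0∞ := (C₁ + C₂ + (D₁₂ + D₁₂)) * ENNReal.ofReal ((2:ℝ) ^ (-β)) with hMn
    have hMfin : Mn ≠ ⊤ := by
      rw [hMn]
      refine ENNReal.mul_ne_top ?_ ENNReal.ofReal_ne_top
      exact ENNReal.add_ne_top.2
        ⟨ENNReal.add_ne_top.2 ⟨hC₁fin, hC₂fin⟩,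
         ENNReal.add_ne_top.2 ⟨hD₁₂fin, hD₁₂fin⟩⟩
    refine ⟨Mn.toReal + 1, 1, by positivity, one_pos, fun a r hr x hx hx0 => ?_⟩
    have hR : 0 < ‖a‖ + r := by positivity
    have hs : 0 < ‖x‖ := norm_pos_iff.2 hx0
    have hs2 : 0 < ‖x‖ / 2 := by positivity
    have hhalfβ : (‖x‖ / 2) ^ β = (2:ℝ) ^ (-β) * ‖x‖ ^ β := by
      rw [div_eq_mul_inv, Real.mul_rpow hs.le (by norm_num),
        Real.inv_rpow (by norm_num), ← Real.rpow_neg (by norm_num)]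
      ring
    set P : Set (EuclideanSpace ℝ (Fin ν)) := ball x (‖x‖ / 2) with hP'
    set Q : Set (EuclideanSpace ℝ (Fin ν)) := ball 0 (‖x‖ / 2) with hQ'
    set W : Set (EuclideanSpace ℝ (Fin ν)) := ball a r \ (P ∪ Q) with hW'
    set Ia : Set (EuclideanSpace ℝ (Fin ν)) := ball a r ∩ P with hIa'
    set IIa : Set (EuclideanSpace ℝ (Fin ν)) := ball a r ∩ Q with hIIa'
    set IIIa : Set (EuclideanSpace ℝ (Fin ν)) := W ∩ {z | ‖x - z‖ ≤ ‖z‖} with hIIIa'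
    set IIIb : Set (EuclideanSpace ℝ (Fin ν)) := W ∩ {z | ‖z‖ ≤ ‖x - z‖} with hIIIb'
    have hcover : ball a r ⊆ (Ia ∪ IIa) ∪ (IIIa ∪ IIIb) := by
      intro z hz
      by_cases hp : z ∈ P
      · exact Set.mem_union_left _ (Set.mem_union_left _ ⟨hz, hp⟩)
      by_cases hq : z ∈ Q
      · exact Set.mem_union_left _ (Set.mem_union_right _ ⟨hz, hq⟩)
      have hw : z ∈ W := ⟨hz, fun h => h.elim hp hq⟩
      rcases le_total ‖x - z‖ ‖z‖ with h | h
      · exact Set.mem_union_right _ (Set.mem_union_left _ ⟨hw, h⟩)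
      · exact Set.mem_union_right _ (Set.mem_union_right _ ⟨hw, h⟩)
    have hIabound : ∫⁻ z in Ia, ENNReal.ofReal (‖x - z‖ ^ (-α₁) * ‖z‖ ^ (-α₂)) ∂volume
        ≤ C₁ * ENNReal.ofReal ((2:ℝ) ^ (-β)) * ENNReal.ofReal (‖x‖ ^ β) := by
      have hκ : (0:ℝ) ≤ (‖x‖ / 2) ^ (-α₂) := Real.rpow_nonneg hs2.le _
      have hpt : ∀ z ∈ Ia, ‖x - z‖ ^ (-α₁) * ‖z‖ ^ (-α₂)
          ≤ (‖x‖ / 2) ^ (-α₂) * ‖z - x‖ ^ (-α₁) := by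
        intro z hz
        have hzx : ‖z - x‖ < ‖x‖ / 2 := by
          rw [← dist_eq_norm]; exact mem_ball.1 hz.2
        have hlow : ‖x‖ / 2 ≤ ‖z‖ := by
          have h := norm_sub_norm_le x z
          rw [norm_sub_rev x z] at h
          linarith
        have hb1 : ‖z‖ ^ (-α₂) ≤ (‖x‖ / 2) ^ (-α₂) :=
          Real.rpow_le_rpow_of_nonpos hs2 hlow (neg_nonpos.2 hα₂0.le)
        calc ‖x - z‖ ^ (-α₁) * ‖z‖ ^ (-α₂)
            ≤ ‖x - z‖ ^ (-α₁) * (‖x‖ / 2) ^ (-α₂) :=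
              mul_le_mul_of_nonneg_left hb1 (Real.rpow_nonneg (norm_nonneg _) _)
          _ = (‖x‖ / 2) ^ (-α₂) * ‖z - x‖ ^ (-α₁) := by rw [norm_sub_rev]; ring
      calc ∫⁻ z in Ia, ENNReal.ofReal (‖x - z‖ ^ (-α₁) * ‖z‖ ^ (-α₂)) ∂volume
          ≤ ENNReal.ofReal ((‖x‖ / 2) ^ (-α₂))
              * ∫⁻ z in P, ENNReal.ofReal (‖z - x‖ ^ (-α₁)) ∂volume :=
            region_le hκ Set.inter_subset_right hpt
        _ ≤ ENNReal.ofReal ((‖x‖ / 2) ^ (-α₂))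
              * (C₁ * ENNReal.ofReal ((‖x‖ / 2) ^ ((ν:ℝ) - α₁))) := by
            gcongr
            exact hC₁ x (‖x‖ / 2) hs2
        _ = C₁ * ENNReal.ofReal ((2:ℝ) ^ (-β)) * ENNReal.ofReal (‖x‖ ^ β) := by
            refine ofReal_shuffle _ hκ (Real.rpow_nonneg (by norm_num) _) ?_
            rw [← Real.rpow_add hs2, show -α₂ + ((ν:ℝ) - α₁) = β by rw [hβdef]; ring,
              hhalfβ]
    have hIIabound : ∫⁻ z in IIa, ENNReal.ofReal (‖x - z‖ ^ (-α₁) * ‖z‖ ^ (-α₂)) ∂volume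
        ≤ C₂ * ENNReal.ofReal ((2:ℝ) ^ (-β)) * ENNReal.ofReal (‖x‖ ^ β) := by
      have hκ : (0:ℝ) ≤ (‖x‖ / 2) ^ (-α₁) := Real.rpow_nonneg hs2.le _
      have hpt : ∀ z ∈ IIa, ‖x - z‖ ^ (-α₁) * ‖z‖ ^ (-α₂)
          ≤ (‖x‖ / 2) ^ (-α₁) * ‖z - (0 : EuclideanSpace ℝ (Fin ν))‖ ^ (-α₂) := by
        intro z hz
        have hzx : ‖z‖ < ‖x‖ / 2 := mem_ball_zero_iff.1 hz.2
        have hlow : ‖x‖ / 2 ≤ ‖x - z‖ := by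
          have h := norm_sub_norm_le x z
          linarith
        have hb1 : ‖x - z‖ ^ (-α₁) ≤ (‖x‖ / 2) ^ (-α₁) :=
          Real.rpow_le_rpow_of_nonpos hs2 hlow (neg_nonpos.2 hα₁0.le)
        calc ‖x - z‖ ^ (-α₁) * ‖z‖ ^ (-α₂)
            ≤ (‖x‖ / 2) ^ (-α₁) * ‖z‖ ^ (-α₂) :=
              mul_le_mul_of_nonneg_right hb1 (Real.rpow_nonneg (norm_nonneg _) _)
          _ = (‖x‖ / 2) ^ (-α₁) * ‖z - (0 : EuclideanSpace ℝ (Fin ν))‖ ^ (-α₂) := by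
              rw [sub_zero]
      calc ∫⁻ z in IIa, ENNReal.ofReal (‖x - z‖ ^ (-α₁) * ‖z‖ ^ (-α₂)) ∂volume
          ≤ ENNReal.ofReal ((‖x‖ / 2) ^ (-α₁))
              * ∫⁻ z in Q, ENNReal.ofReal (‖z - 0‖ ^ (-α₂)) ∂volume :=
            region_le hκ Set.inter_subset_right hpt
        _ ≤ ENNReal.ofReal ((‖x‖ / 2) ^ (-α₁))
              * (C₂ * ENNReal.ofReal ((‖x‖ / 2) ^ ((ν:ℝ) - α₂))) := by
            gcongr
            exact hC₂ 0 (‖x‖ / 2) hs2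
        _ = C₂ * ENNReal.ofReal ((2:ℝ) ^ (-β)) * ENNReal.ofReal (‖x‖ ^ β) := by
            refine ofReal_shuffle _ hκ (Real.rpow_nonneg (by norm_num) _) ?_
            rw [← Real.rpow_add hs2, show -α₁ + ((ν:ℝ) - α₂) = β by rw [hβdef]; ring,
              hhalfβ]
    have hIIIabound : ∫⁻ z in IIIa, ENNReal.ofReal (‖x - z‖ ^ (-α₁) * ‖z‖ ^ (-α₂)) ∂volume
        ≤ D₁₂ * ENNReal.ofReal ((2:ℝ) ^ (-β)) * ENNReal.ofReal (‖x‖ ^ β) := by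
      have hsub : IIIa ⊆ Pᶜ := fun z hz h => hz.1.2 (Set.mem_union_left _ h)
      have hpt : ∀ z ∈ IIIa, ‖x - z‖ ^ (-α₁) * ‖z‖ ^ (-α₂)
          ≤ 1 * ‖z - x‖ ^ (-(α₁ + α₂)) := by
        intro z hz
        have hnp : z ∉ P := fun h => hz.1.2 (Set.mem_union_left _ h)
        have hge : ‖x‖ / 2 ≤ ‖z - x‖ := by
          rw [← dist_eq_norm]
          exact not_lt.1 fun h => hnp (mem_ball.2 h)
        have hxz : 0 < ‖x - z‖ := by rw [norm_sub_rev]; linarith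
        have hb1 : ‖z‖ ^ (-α₂) ≤ ‖x - z‖ ^ (-α₂) :=
          Real.rpow_le_rpow_of_nonpos hxz hz.2 (neg_nonpos.2 hα₂0.le)
        calc ‖x - z‖ ^ (-α₁) * ‖z‖ ^ (-α₂)
            ≤ ‖x - z‖ ^ (-α₁) * ‖x - z‖ ^ (-α₂) :=
              mul_le_mul_of_nonneg_left hb1 (Real.rpow_nonneg (norm_nonneg _) _)
          _ = ‖x - z‖ ^ (-(α₁ + α₂)) := by rw [← Real.rpow_add hxz, neg_add]
          _ = 1 * ‖z - x‖ ^ (-(α₁ + α₂)) := by rw [norm_sub_rev, one_mul]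
      calc ∫⁻ z in IIIa, ENNReal.ofReal (‖x - z‖ ^ (-α₁) * ‖z‖ ^ (-α₂)) ∂volume
          ≤ ENNReal.ofReal 1
              * ∫⁻ z in Pᶜ, ENNReal.ofReal (‖z - x‖ ^ (-(α₁ + α₂))) ∂volume :=
            region_le zero_le_one hsub hpt
        _ ≤ ENNReal.ofReal 1
              * (D₁₂ * ENNReal.ofReal ((‖x‖ / 2) ^ ((ν:ℝ) - (α₁ + α₂)))) := by
            gcongr
            exact hD₁₂ x (‖x‖ / 2) hs2
        _ = D₁₂ * ENNReal.ofReal ((2:ℝ) ^ (-β)) * ENNReal.ofReal (‖x‖ ^ β) :=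
            ofReal_shuffle _ zero_le_one (Real.rpow_nonneg (by norm_num) _)
              (by rw [one_mul, heβ, hhalfβ])
    have hIIIbbound : ∫⁻ z in IIIb, ENNReal.ofReal (‖x - z‖ ^ (-α₁) * ‖z‖ ^ (-α₂)) ∂volume
        ≤ D₁₂ * ENNReal.ofReal ((2:ℝ) ^ (-β)) * ENNReal.ofReal (‖x‖ ^ β) := by
      have hsub : IIIb ⊆ Qᶜ := fun z hz h => hz.1.2 (Set.mem_union_right _ h)
      have hpt : ∀ z ∈ IIIb, ‖x - z‖ ^ (-α₁) * ‖z‖ ^ (-α₂)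
          ≤ 1 * ‖z - (0 : EuclideanSpace ℝ (Fin ν))‖ ^ (-(α₁ + α₂)) := by
        intro z hz
        have hnq : z ∉ Q := fun h => hz.1.2 (Set.mem_union_right _ h)
        have hge : ‖x‖ / 2 ≤ ‖z‖ :=
          not_lt.1 fun h => hnq (mem_ball_zero_iff.2 h)
        have hzp : 0 < ‖z‖ := lt_of_lt_of_le hs2 hge
        have hb1 : ‖x - z‖ ^ (-α₁) ≤ ‖z‖ ^ (-α₁) :=
          Real.rpow_le_rpow_of_nonpos hzp hz.2 (neg_nonpos.2 hα₁0.le)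
        calc ‖x - z‖ ^ (-α₁) * ‖z‖ ^ (-α₂)
            ≤ ‖z‖ ^ (-α₁) * ‖z‖ ^ (-α₂) :=
              mul_le_mul_of_nonneg_right hb1 (Real.rpow_nonneg (norm_nonneg _) _)
          _ = ‖z‖ ^ (-(α₁ + α₂)) := by rw [← Real.rpow_add hzp, neg_add]
          _ = 1 * ‖z - (0 : EuclideanSpace ℝ (Fin ν))‖ ^ (-(α₁ + α₂)) := by
              rw [sub_zero, one_mul]
      calc ∫⁻ z in IIIb, ENNReal.ofReal (‖x - z‖ ^ (-α₁) * ‖z‖ ^ (-α₂)) ∂volume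
          ≤ ENNReal.ofReal 1
              * ∫⁻ z in Qᶜ, ENNReal.ofReal (‖z - 0‖ ^ (-(α₁ + α₂))) ∂volume :=
            region_le zero_le_one hsub hpt
        _ ≤ ENNReal.ofReal 1
              * (D₁₂ * ENNReal.ofReal ((‖x‖ / 2) ^ ((ν:ℝ) - (α₁ + α₂)))) := by
            gcongr
            exact hD₁₂ 0 (‖x‖ / 2) hs2
        _ = D₁₂ * ENNReal.ofReal ((2:ℝ) ^ (-β)) * ENNReal.ofReal (‖x‖ ^ β) :=
            ofReal_shuffle _ zero_le_one (Real.rpow_nonneg (by norm_num) _)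
              (by rw [one_mul, heβ, hhalfβ])
    have hchain : (∫⁻ z in ball a r,
          ENNReal.ofReal (‖x - z‖ ^ (-α₁) * ‖z‖ ^ (-α₂)) ∂volume)
        ≤ Mn * ENNReal.ofReal (‖x‖ ^ β) := by
      calc ∫⁻ z in ball a r, ENNReal.ofReal (‖x - z‖ ^ (-α₁) * ‖z‖ ^ (-α₂)) ∂volume
          ≤ ∫⁻ z in (Ia ∪ IIa) ∪ (IIIa ∪ IIIb),
              ENNReal.ofReal (‖x - z‖ ^ (-α₁) * ‖z‖ ^ (-α₂)) ∂volume :=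
            lintegral_mono_set hcover
        _ ≤ ((∫⁻ z in Ia, ENNReal.ofReal (‖x - z‖ ^ (-α₁) * ‖z‖ ^ (-α₂)) ∂volume)
              + ∫⁻ z in IIa, ENNReal.ofReal (‖x - z‖ ^ (-α₁) * ‖z‖ ^ (-α₂)) ∂volume)
            + ((∫⁻ z in IIIa, ENNReal.ofReal (‖x - z‖ ^ (-α₁) * ‖z‖ ^ (-α₂)) ∂volume)
              + ∫⁻ z in IIIb, ENNReal.ofReal (‖x - z‖ ^ (-α₁) * ‖z‖ ^ (-α₂)) ∂volume) :=
            le_trans (lintegral_union_le _ _ _)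
              (add_le_add (lintegral_union_le _ _ _) (lintegral_union_le _ _ _))
        _ ≤ (C₁ * ENNReal.ofReal ((2:ℝ) ^ (-β)) * ENNReal.ofReal (‖x‖ ^ β)
              + C₂ * ENNReal.ofReal ((2:ℝ) ^ (-β)) * ENNReal.ofReal (‖x‖ ^ β))
            + (D₁₂ * ENNReal.ofReal ((2:ℝ) ^ (-β)) * ENNReal.ofReal (‖x‖ ^ β)
              + D₁₂ * ENNReal.ofReal ((2:ℝ) ^ (-β)) * ENNReal.ofReal (‖x‖ ^ β)) :=
            add_le_add (add_le_add hIabound hIIabound) (add_le_add hIIIabound hIIIbbound)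
        _ = Mn * ENNReal.ofReal (‖x‖ ^ β) := by rw [hMn]; ring
    exact aux_final hMfin (Real.rpow_nonneg (norm_nonneg x) β)
      (Real.rpow_nonneg hR.le β) hchain
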